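/- Let Φ denote the standard normal cumulative distribution function and let b, h > 0. Then ∫₀^∞ [ Φ((h - z)/√(b z)) - Φ(-√(z/b)) ] dz = h. -/

import Mathlib

open Real MeasureTheory Set ENNReal

lemma cov1d {s : Set ℝ} (hs : MeasurableSet s) {f f' : ℝ → ℝ}
    (hf' : ∀ x ∈ s, HasDerivWithinAt f (f' x) s x) (hf : Set.InjOn f s) (g : ℝ → ℝ≥0∞) :
    ∫⁻ x in f '' s, g x = ∫⁻ x in s, ENNReal.ofReal |f' x| * g (f x) := by
  simpa only [ContinuousLinearMap.det_toSpanSingleton] using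
    lintegral_image_eq_lintegral_abs_det_fderiv_mul volume hs
      (fun x hx => (hf' x hx).hasFDerivWithinAt) hf g

lemma img_sq : (fun v : ℝ => v ^ 2) '' Set.Ioi 0 = Set.Ioi 0 := by
  ext x; constructor
  · rintro ⟨v, hv, rfl⟩; exact pow_pos (show (0:ℝ) < v from hv) 2
  · intro hx; exact ⟨Real.sqrt x, Real.sqrt_pos.2 hx, Real.sq_sqrt hx.le⟩

lemma img_inv (a c : ℝ) (ha : 0 < a) (hc : 0 < c) :
    (fun t : ℝ => c / (a * t)) '' Set.Ioi 0 = Set.Ioi 0 := by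
  ext x; constructor
  · rintro ⟨t, ht, rfl⟩; exact div_pos hc (mul_pos ha ht)
  · intro hx
    have hx' : (0:ℝ) < x := hx
    refine ⟨c / (a * x), div_pos hc (mul_pos ha hx'), ?_⟩
    field_simp

lemma img_glasser (a c : ℝ) (ha : 0 < a) (hc : 0 < c) :
    (fun v : ℝ => a * v - c / v) '' Set.Ioi 0 = Set.univ := by
  apply Set.eq_univ_of_forall
  intro w
  set s := Real.sqrt (w ^ 2 + 4 * a * c) with hs
  have hs2 : s ^ 2 = w ^ 2 + 4 * a * c := Real.sq_sqrt (by positivity)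
  have hsw : -w < s := by
    nlinarith [Real.sqrt_nonneg (w ^ 2 + 4 * a * c), abs_nonneg w, sq_abs w,
      neg_abs_le w, le_abs_self w]
  have hv : 0 < (w + s) / (2 * a) := by
    apply div_pos (by linarith) (by linarith)
  refine ⟨(w + s) / (2 * a), hv, ?_⟩
  have hws : (0:ℝ) < w + s := by linarith
  show a * ((w + s) / (2 * a)) - c / ((w + s) / (2 * a)) = w
  rw [div_div_eq_mul_div, eq_comm, ← sub_eq_zero]
  have e1 : w - (a * ((w + s) / (2 * a)) - c * (2 * a) / (w + s)) =
      (w * (2 * a) * (w + s) - (a * (w + s) * (w + s) - c * (2 * a) * (2 * a))) /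
        ((2 * a) * (w + s)) := by
    field_simp
  have e2 : w * (2 * a) * (w + s) - (a * (w + s) * (w + s) - c * (2 * a) * (2 * a)) = 0 := by
    nlinarith [hs2]
  rw [e1, e2, zero_div]

lemma glasser_strictmono (a c : ℝ) (ha : 0 < a) (hc : 0 < c) :
    StrictMonoOn (fun v : ℝ => a * v - c / v) (Set.Ioi 0) := by
  intro x hx y hy hxy
  have hx' : (0:ℝ) < x := hx
  have hy' : (0:ℝ) < y := hy
  have h1 : c / y < c / x := div_lt_div_of_pos_left hc hx' hxy
  have h2 : a * x < a * y := by nlinarith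
  simp only
  linarith

lemma glasser_deriv (a c : ℝ) (v : ℝ) (hv : 0 < v) :
    HasDerivAt (fun v : ℝ => a * v - c / v) (a + c / v ^ 2) v := by
  have h1 : HasDerivAt (fun v : ℝ => a * v) a v := by
    simpa using (hasDerivAt_id v).const_mul a
  have h2 : HasDerivAt (fun v : ℝ => c / v) (c * (-(v ^ 2)⁻¹)) v := by
    simpa [div_eq_mul_inv] using (hasDerivAt_inv hv.ne').const_mul c
  exact (h1.sub h2).congr_deriv (by ring)

lemma meas_core (a c : ℝ) : Measurable (fun v : ℝ => Real.exp (-(a * v - c / v) ^ 2)) := by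
  apply Measurable.exp
  apply Measurable.neg
  apply Measurable.pow _ measurable_const
  exact (measurable_const.mul measurable_id).sub (measurable_const.div measurable_id)

lemma glasser_swap (a c : ℝ) (ha : 0 < a) (hc : 0 < c) :
    ∫⁻ v in Set.Ioi 0, ENNReal.ofReal ((c / v ^ 2) * Real.exp (-(a * v - c / v) ^ 2))
      = ∫⁻ v in Set.Ioi 0, ENNReal.ofReal (a * Real.exp (-(a * v - c / v) ^ 2)) := by
  have hderiv : ∀ t ∈ Set.Ioi (0:ℝ),
      HasDerivWithinAt (fun t : ℝ => c / (a * t)) (-(c / (a * t ^ 2))) (Set.Ioi 0) t := by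
    intro t ht
    have ht' : (0:ℝ) < t := ht
    have key : HasDerivAt (fun t : ℝ => (c / a) * t⁻¹) ((c / a) * (-(t ^ 2)⁻¹)) t :=
      (hasDerivAt_inv ht'.ne').const_mul _
    have funeq : (fun t : ℝ => c / (a * t)) = fun t : ℝ => (c / a) * t⁻¹ := by
      funext x; rw [div_mul_eq_div_div, div_eq_mul_inv]
    have veq : -(c / (a * t ^ 2)) = (c / a) * (-(t ^ 2)⁻¹) := by
      rw [mul_neg, ← div_eq_mul_inv, div_div]
    rw [funeq, veq]
    exact key.hasDerivWithinAt
  have hanti : StrictAntiOn (fun t : ℝ => c / (a * t)) (Set.Ioi 0) := by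
    intro x hx y hy hxy
    have hx' : (0:ℝ) < x := hx
    exact div_lt_div_of_pos_left hc (mul_pos ha hx') (by nlinarith)
  have hinj : Set.InjOn (fun t : ℝ => c / (a * t)) (Set.Ioi 0) := hanti.injOn
  have h := cov1d (f := fun t : ℝ => c / (a * t)) (f' := fun t => -(c / (a * t ^ 2)))
    measurableSet_Ioi hderiv hinj
    (fun v => ENNReal.ofReal ((c / v ^ 2) * Real.exp (-(a * v - c / v) ^ 2)))
  rw [img_inv a c ha hc] at h
  rw [h]
  apply setLIntegral_congr_fun measurableSet_Ioi
  intro t ht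
  beta_reduce
  have ht' : (0:ℝ) < t := ht
  have h1 : |(-(c / (a * t ^ 2)))| = c / (a * t ^ 2) := by
    rw [abs_neg, abs_of_pos (by positivity)]
  rw [h1, ← ENNReal.ofReal_mul (by positivity)]
  congr 1
  have e1 : a * (c / (a * t)) = c / t := by field_simp
  have e2 : c / (c / (a * t)) = a * t := by
    rw [div_div_eq_mul_div, mul_comm, mul_div_assoc, div_self hc.ne', mul_one]
  have e3 : c / (c / (a * t)) ^ 2 = a ^ 2 * t ^ 2 / c := by
    rw [div_pow, div_div_eq_mul_div, mul_comm, mul_div_assoc, mul_pow, pow_two c,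
      div_mul_eq_div_div, div_self hc.ne']
    ring
  rw [e1, e2, e3]
  have e4 : (c / t - a * t) ^ 2 = (a * t - c / t) ^ 2 := by ring
  rw [e4]
  have : c / (a * t ^ 2) * (a ^ 2 * t ^ 2 / c * Real.exp (-(a * t - c / t) ^ 2))
      = (c * (a ^ 2 * t ^ 2)) / ((a * t ^ 2) * c) * Real.exp (-(a * t - c / t) ^ 2) := by
    ring
  rw [this]
  congr 1
  field_simp

lemma glasserA (a c : ℝ) (ha : 0 < a) (hc : 0 < c) :
    ∫⁻ v in Set.Ioi 0, ENNReal.ofReal (Real.exp (-(a * v - c / v) ^ 2))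
      = ENNReal.ofReal (Real.sqrt π / (2 * a)) := by
  have hgauss : ∫⁻ x : ℝ, ENNReal.ofReal (Real.exp (-x ^ 2)) = ENNReal.ofReal (Real.sqrt π) := by
    rw [← ofReal_integral_eq_lintegral_ofReal]
    · congr 1
      have := integral_gaussian 1
      simpa using this
    · simpa using integrable_exp_neg_mul_sq (one_pos)
    · exact Filter.Eventually.of_forall (fun x => (Real.exp_pos _).le)
  have hcov := cov1d (f := fun v : ℝ => a * v - c / v) (f' := fun v => a + c / v ^ 2)
    measurableSet_Ioi
    (fun x hx => ((glasser_deriv a c x hx).hasDerivWithinAt))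
    ((glasser_strictmono a c ha hc).injOn)
    (fun x => ENNReal.ofReal (Real.exp (-x ^ 2)))
  rw [img_glasser a c ha hc, Measure.restrict_univ] at hcov
  have hsplit : ∫⁻ v in Set.Ioi 0,
      ENNReal.ofReal |a + c / v ^ 2| * ENNReal.ofReal (Real.exp (-(a * v - c / v) ^ 2))
      = (∫⁻ v in Set.Ioi 0, ENNReal.ofReal (a * Real.exp (-(a * v - c / v) ^ 2)))
        + ∫⁻ v in Set.Ioi 0, ENNReal.ofReal ((c / v ^ 2) * Real.exp (-(a * v - c / v) ^ 2)) := by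
    rw [← lintegral_add_left]
    · apply setLIntegral_congr_fun measurableSet_Ioi
      intro v hv
      beta_reduce
      have hv' : (0:ℝ) < v := hv
      rw [abs_of_pos (by positivity), ← ENNReal.ofReal_mul (by positivity),
        ← ENNReal.ofReal_add (by positivity) (by positivity)]
      congr 1
      ring
    · exact ((measurable_const.mul (meas_core a c))).ennreal_ofReal
  have h2 : ∫⁻ v in Set.Ioi 0, ENNReal.ofReal (a * Real.exp (-(a * v - c / v) ^ 2))
      = ENNReal.ofReal a * ∫⁻ v in Set.Ioi 0, ENNReal.ofReal (Real.exp (-(a * v - c / v) ^ 2)) := by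
    rw [← lintegral_const_mul]
    · apply setLIntegral_congr_fun measurableSet_Ioi
      intro v hv
      beta_reduce
      rw [← ENNReal.ofReal_mul ha.le]
    · exact (meas_core a c).ennreal_ofReal
  have key : ENNReal.ofReal (2 * a)
        * ∫⁻ v in Set.Ioi 0, ENNReal.ofReal (Real.exp (-(a * v - c / v) ^ 2))
      = ENNReal.ofReal (Real.sqrt π) := by
    rw [← hgauss, hcov, hsplit, glasser_swap a c ha hc, h2, ← two_mul]
    rw [ENNReal.ofReal_mul (by norm_num), ENNReal.ofReal_ofNat, mul_assoc]
  have h2a0 : ENNReal.ofReal (2 * a) ≠ 0 := by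
    simp [ENNReal.ofReal_eq_zero]; linarith
  have h2atop : ENNReal.ofReal (2 * a) ≠ ⊤ := ENNReal.ofReal_ne_top
  have hval : ENNReal.ofReal (2 * a) * ENNReal.ofReal (Real.sqrt π / (2 * a))
      = ENNReal.ofReal (Real.sqrt π) := by
    rw [← ENNReal.ofReal_mul (by positivity)]
    congr 1
    field_simp
  exact (ENNReal.mul_right_inj h2a0 h2atop).mp (by rw [key, hval])

lemma keyB (p q : ℝ) (hp : 0 < p) (hq : 0 < q) :
    ∫⁻ v in Set.Ioi 0, ENNReal.ofReal (Real.exp (-(p / v ^ 2) - q * v ^ 2))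
      = ENNReal.ofReal (Real.exp (-(2 * Real.sqrt (p * q))) * (Real.sqrt π / (2 * Real.sqrt q))) := by
  have hsp : Real.sqrt p ^ 2 = p := Real.sq_sqrt hp.le
  have hsq : Real.sqrt q ^ 2 = q := Real.sq_sqrt hq.le
  have hspq : Real.sqrt p * Real.sqrt q = Real.sqrt (p * q) := (Real.sqrt_mul hp.le q).symm
  have hcongr : ∫⁻ v in Set.Ioi 0, ENNReal.ofReal (Real.exp (-(p / v ^ 2) - q * v ^ 2))
      = ∫⁻ v in Set.Ioi 0, ENNReal.ofReal (Real.exp (-(2 * Real.sqrt (p * q)))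
          * Real.exp (-(Real.sqrt q * v - Real.sqrt p / v) ^ 2)) := by
    apply setLIntegral_congr_fun measurableSet_Ioi
    intro v hv
    beta_reduce
    have hv' : (0:ℝ) < v := hv
    rw [← Real.exp_add]
    congr 2
    have expand : (Real.sqrt q * v - Real.sqrt p / v) ^ 2
        = q * v ^ 2 - 2 * Real.sqrt (p * q) + p / v ^ 2 := by
      have : (Real.sqrt q * v - Real.sqrt p / v) ^ 2
          = Real.sqrt q ^ 2 * v ^ 2 - 2 * (Real.sqrt p * Real.sqrt q) * (v / v)
            + Real.sqrt p ^ 2 / v ^ 2 := by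
        field_simp
        ring
      rw [this, div_self hv'.ne', hsp, hsq, hspq]
      ring
    rw [expand]
    ring
  rw [hcongr]
  have hmul : ∀ v : ℝ, ENNReal.ofReal (Real.exp (-(2 * Real.sqrt (p * q)))
        * Real.exp (-(Real.sqrt q * v - Real.sqrt p / v) ^ 2))
      = ENNReal.ofReal (Real.exp (-(2 * Real.sqrt (p * q))))
        * ENNReal.ofReal (Real.exp (-(Real.sqrt q * v - Real.sqrt p / v) ^ 2)) := by
    intro v; rw [← ENNReal.ofReal_mul (Real.exp_pos _).le]
  simp only [hmul]
  rw [lintegral_const_mul _ ((meas_core (Real.sqrt q) (Real.sqrt p)).ennreal_ofReal),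
    glasserA _ _ (Real.sqrt_pos.2 hq) (Real.sqrt_pos.2 hp),
    ← ENNReal.ofReal_mul (Real.exp_pos _).le]

noncomputable def F (b z u : ℝ) : ℝ :=
  (Real.sqrt (2 * π))⁻¹ * (Real.sqrt (b * z))⁻¹
    * Real.exp (-((u - z) / Real.sqrt (b * z)) ^ 2 / 2)

lemma measF (b : ℝ) : Measurable (Function.uncurry (fun z u => F b z u)) := by
  unfold F
  apply Measurable.mul
  · apply Measurable.mul measurable_const
    exact (measurable_fst.const_mul b).sqrt.inv
  · apply Measurable.exp
    apply Measurable.div _ measurable_const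
    apply Measurable.neg
    apply Measurable.pow _ measurable_const
    exact (measurable_snd.sub measurable_fst).div (measurable_fst.const_mul b).sqrt

lemma keyC (b u : ℝ) (hb : 0 < b) (hu : 0 < u) :
    ∫⁻ z in Set.Ioi 0, ENNReal.ofReal (F b z u) = 1 := by
  have hderiv : ∀ v ∈ Set.Ioi (0:ℝ),
      HasDerivWithinAt (fun v : ℝ => v ^ 2) (2 * v) (Set.Ioi 0) v := by
    intro v hv
    simpa using (hasDerivAt_pow 2 v).hasDerivWithinAt
  have hinj : Set.InjOn (fun v : ℝ => v ^ 2) (Set.Ioi 0) :=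
    (pow_left_strictMonoOn₀ (by norm_num)).injOn.mono (Set.Ioi_subset_Ici le_rfl)
  have hcov := cov1d (f := fun v : ℝ => v ^ 2) (f' := fun v => 2 * v)
    measurableSet_Ioi hderiv hinj (fun z => ENNReal.ofReal (F b z u))
  rw [img_sq] at hcov
  rw [hcov]
  have hpt : ∀ v ∈ Set.Ioi (0:ℝ),
      ENNReal.ofReal |2 * v| * ENNReal.ofReal (F b (v ^ 2) u)
        = ENNReal.ofReal (2 * (Real.sqrt (2 * π))⁻¹ * (Real.sqrt b)⁻¹ * Real.exp (u / b))
          * ENNReal.ofReal (Real.exp (-(u ^ 2 / (2 * b) / v ^ 2) - (1 / (2 * b)) * v ^ 2)) := by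
    intro v hv
    have hv' : (0:ℝ) < v := hv
    have hsb : Real.sqrt b > 0 := Real.sqrt_pos.2 hb
    have hsbv : Real.sqrt (b * v ^ 2) = Real.sqrt b * v := by
      rw [Real.sqrt_mul hb.le, Real.sqrt_sq hv'.le]
    have hexp : -((u - v ^ 2) / (Real.sqrt b * v)) ^ 2 / 2
        = u / b + (-(u ^ 2 / (2 * b) / v ^ 2) - (1 / (2 * b)) * v ^ 2) := by
      have hb2 : Real.sqrt b ^ 2 = b := Real.sq_sqrt hb.le
      field_simp
      rw [hb2]
      ring
    rw [abs_of_pos (by positivity), ← ENNReal.ofReal_mul (by positivity),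
      ← ENNReal.ofReal_mul (by positivity)]
    congr 1
    unfold F
    rw [hsbv, hexp, Real.exp_add]
    field_simp
  rw [setLIntegral_congr_fun measurableSet_Ioi hpt]
  rw [lintegral_const_mul]
  · rw [keyB _ _ (by positivity) (by positivity)]
    rw [← ENNReal.ofReal_mul (by positivity)]
    have harg : 2 * (Real.sqrt (2 * π))⁻¹ * (Real.sqrt b)⁻¹ * Real.exp (u / b)
        * (Real.exp (-(2 * Real.sqrt (u ^ 2 / (2 * b) * (1 / (2 * b)))))
          * (Real.sqrt π / (2 * Real.sqrt (1 / (2 * b))))) = 1 := by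
      have hs1 : Real.sqrt (u ^ 2 / (2 * b) * (1 / (2 * b))) = u / (2 * b) := by
        rw [show u ^ 2 / (2 * b) * (1 / (2 * b)) = (u / (2 * b)) ^ 2 by ring]
        exact Real.sqrt_sq (by positivity)
      have hs2 : Real.sqrt (1 / (2 * b)) = 1 / Real.sqrt (2 * b) := by
        rw [one_div, Real.sqrt_inv, one_div]
      have hs3 : Real.sqrt (2 * b) = Real.sqrt 2 * Real.sqrt b := Real.sqrt_mul (by norm_num) b
      have hs4 : Real.sqrt (2 * π) = Real.sqrt 2 * Real.sqrt π := Real.sqrt_mul (by norm_num) π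
      have h2pos : (0:ℝ) < Real.sqrt 2 := Real.sqrt_pos.2 (by norm_num)
      have hπpos : (0:ℝ) < Real.sqrt π := Real.sqrt_pos.2 Real.pi_pos
      have hbpos : (0:ℝ) < Real.sqrt b := Real.sqrt_pos.2 hb
      have hepos : (0:ℝ) < Real.exp (u / b) := Real.exp_pos _
      rw [hs1, hs2, hs3, hs4, show -(2 * (u / (2 * b))) = -(u / b) by rw [neg_inj]; field_simp,
        Real.exp_neg]
      field_simp
    rw [harg, ENNReal.ofReal_one]
  · exact ((measurable_const.div ((measurable_id.pow_const 2))).neg.sub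
      (measurable_const.mul (measurable_id.pow_const 2))).exp.ennreal_ofReal

lemma phi_integrable : MeasureTheory.Integrable
    (fun s : ℝ => (Real.sqrt (2 * π))⁻¹ * Real.exp (-(s ^ 2) / 2)) := by
  have : (fun s : ℝ => (Real.sqrt (2 * π))⁻¹ * Real.exp (-(s ^ 2) / 2))
      = fun s : ℝ => (Real.sqrt (2 * π))⁻¹ * Real.exp (-(1/2 : ℝ) * s ^ 2) := by
    funext s; congr 1; ring_nf
  rw [this]
  exact (integrable_exp_neg_mul_sq (by norm_num : (0:ℝ) < 1/2)).const_mul _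

lemma lemD (b h z : ℝ) (hb : 0 < b) (hh : 0 < h) (hz : 0 < z)
    (Φ : ℝ → ℝ)
    (hΦ : ∀ t, Φ t = ∫ s in Set.Iic t, (Real.sqrt (2 * π))⁻¹ * Real.exp (-(s ^ 2) / 2)) :
    Φ ((h - z) / Real.sqrt (b * z)) - Φ (-Real.sqrt (z / b))
      = ∫ u in Set.Ioc 0 h, F b z u := by
  set c := Real.sqrt (b * z) with hc
  have hcpos : 0 < c := Real.sqrt_pos.2 (by positivity)
  set φ := fun s : ℝ => (Real.sqrt (2 * π))⁻¹ * Real.exp (-(s ^ 2) / 2) with hφ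
  have ht1 : -Real.sqrt (z / b) = 0 / c - z / c := by
    rw [zero_div, zero_sub, neg_inj, eq_div_iff hcpos.ne']
    rw [← Real.sqrt_mul (by positivity) (b * z)]
    rw [show z / b * (b * z) = z ^ 2 * (b / b) by ring, div_self hb.ne', mul_one]
    exact Real.sqrt_sq hz.le
  have ht2 : (h - z) / c = h / c - z / c := by rw [sub_div]
  have hstep1 : Φ ((h - z) / c) - Φ (-Real.sqrt (z / b))
      = ∫ s in (-Real.sqrt (z / b))..((h - z) / c), φ s := by
    rw [hΦ, hΦ]
    exact intervalIntegral.integral_Iic_sub_Iic phi_integrable.integrableOn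
      phi_integrable.integrableOn
  have hstep2 : ∫ s in (-Real.sqrt (z / b))..((h - z) / c), φ s
      = c⁻¹ * ∫ u in (0:ℝ)..h, φ (u / c - z / c) := by
    rw [intervalIntegral.integral_comp_div_sub φ hcpos.ne' (z / c), ht1, ht2]
    rw [smul_eq_mul, ← mul_assoc, inv_mul_cancel₀ hcpos.ne', one_mul]
  have hstep3 : c⁻¹ * ∫ u in (0:ℝ)..h, φ (u / c - z / c) = ∫ u in (0:ℝ)..h, F b z u := by
    rw [← intervalIntegral.integral_const_mul]
    apply intervalIntegral.integral_congr
    intro u _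
    show c⁻¹ * ((Real.sqrt (2 * π))⁻¹ * Real.exp (-((u / c - z / c) ^ 2) / 2)) = F b z u
    unfold F
    rw [← hc, div_sub_div_same]
    ring
  rw [hstep1, hstep2, hstep3, intervalIntegral.integral_of_le hh.le]

/-- With `Φ` the standard normal cumulative distribution function and `b, h > 0`:
`∫₀^∞ [Φ((h-z)/√(bz)) - Φ(-√(z/b))] dz = h`. -/
theorem stmt14 (b h : ℝ) (hb : 0 < b) (hh : 0 < h)
    (Φ : ℝ → ℝ)
    (hΦ : ∀ t, Φ t = ∫ s in Set.Iic t, (Real.sqrt (2 * Real.pi))⁻¹ * Real.exp (-(s ^ 2) / 2)) :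
    ∫ z in Set.Ioi (0 : ℝ),
        (Φ ((h - z) / Real.sqrt (b * z)) - Φ (-Real.sqrt (z / b))) = h := by
  set g := fun z : ℝ => Φ ((h - z) / Real.sqrt (b * z)) - Φ (-Real.sqrt (z / b)) with hg
  -- Φ is monotone hence measurable
  have hΦmono : Monotone Φ := by
    intro t t' htt
    rw [hΦ t, hΦ t']
    apply MeasureTheory.setIntegral_mono_set phi_integrable.integrableOn
    · exact Filter.Eventually.of_forall (fun s => by positivity)
    · exact Filter.Eventually.of_forall (fun s hs => le_trans hs htt)
  have hΦmeas : Measurable Φ := hΦmono.measurable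
  have hgmeas : Measurable g := by
    apply Measurable.sub
    · exact hΦmeas.comp ((measurable_const.sub measurable_id).div
        (measurable_id.const_mul b).sqrt)
    · exact hΦmeas.comp ((measurable_id.div measurable_const)).sqrt.neg
  -- a.e. identity on Ioi 0
  have hae : ∀ z ∈ Set.Ioi (0:ℝ), g z = ∫ u in Set.Ioc 0 h, F b z u := by
    intro z hz
    exact lemD b h z hb hh hz Φ hΦ
  have hFnonneg : ∀ z u : ℝ, 0 < z → 0 ≤ F b z u := by
    intro z u hz
    unfold F
    positivity
  have hgnn : ∀ z ∈ Set.Ioi (0:ℝ), 0 ≤ g z := by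
    intro z hz
    rw [hae z hz]
    apply MeasureTheory.setIntegral_nonneg measurableSet_Ioc
    exact fun u _ => hFnonneg z u hz
  -- integrability of F b z · on Ioc 0 h for z > 0
  have hFint : ∀ z : ℝ, 0 < z → MeasureTheory.IntegrableOn (fun u => F b z u) (Set.Ioc 0 h) := by
    intro z hz
    apply Continuous.integrableOn_Ioc
    unfold F
    have hc : Real.sqrt (b * z) ≠ 0 := (Real.sqrt_pos.2 (by positivity)).ne'
    continuity
  -- pass to lintegral
  rw [MeasureTheory.integral_eq_lintegral_of_nonneg_ae]
  rotate_left
  · refine (MeasureTheory.ae_restrict_iff' measurableSet_Ioi).mpr ?_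
    exact Filter.Eventually.of_forall (fun z hz => hgnn z hz)
  · exact (hgmeas.aestronglyMeasurable).restrict
  have hlin : ∫⁻ z in Set.Ioi 0, ENNReal.ofReal (g z) = ENNReal.ofReal h := by
    have e1 : ∫⁻ z in Set.Ioi 0, ENNReal.ofReal (g z)
        = ∫⁻ z in Set.Ioi 0, ∫⁻ u in Set.Ioc 0 h, ENNReal.ofReal (F b z u) := by
      apply setLIntegral_congr_fun measurableSet_Ioi
      intro z hz
      beta_reduce
      rw [hae z hz, ← MeasureTheory.ofReal_integral_eq_lintegral_ofReal (hFint z hz)]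
      exact Filter.Eventually.of_forall (fun u => hFnonneg z u hz)
    have e2 : ∫⁻ z in Set.Ioi 0, ∫⁻ u in Set.Ioc 0 h, ENNReal.ofReal (F b z u)
        = ∫⁻ u in Set.Ioc 0 h, ∫⁻ z in Set.Ioi 0, ENNReal.ofReal (F b z u) := by
      apply MeasureTheory.lintegral_lintegral_swap
      exact ((measF b).ennreal_ofReal).aemeasurable
    have e3 : ∫⁻ u in Set.Ioc 0 h, ∫⁻ z in Set.Ioi 0, ENNReal.ofReal (F b z u)
        = ∫⁻ u in Set.Ioc 0 h, 1 := by
      apply setLIntegral_congr_fun measurableSet_Ioc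
      exact fun u hu => keyC b u hb hu.1
    rw [e1, e2, e3, MeasureTheory.setLIntegral_one, Real.volume_Ioc, sub_zero]
  rw [hlin, ENNReal.toReal_ofReal hh.le]
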